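/- The set S_{(s,0)} is nowhere dense in ℝ. -/

import Mathlib

open Finset

/-- The term of the series: `c n / s ^ (c 1 + ... + c (n+1))` (0-indexed). -/
noncomputable def sTerm (s : ℕ) (c : ℕ → ℕ) (n : ℕ) : ℝ :=
  (c n : ℝ) / (s : ℝ) ^ (∑ k ∈ Finset.range (n + 1), c k)

/-- `x = Σ_{k=1}^∞ c_k / s^{c_1+⋯+c_k}`. -/
noncomputable def sVal (s : ℕ) (c : ℕ → ℕ) : ℝ := ∑' n : ℕ, sTerm s c n

/-- The sequence `(c_k)` has all terms in `{1, ..., s-1}`. -/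
def sValid (s : ℕ) (c : ℕ → ℕ) : Prop := ∀ k, 1 ≤ c k ∧ c k ≤ s - 1

/-- The set `S_{(s,0)}`. -/
def Sset (s : ℕ) : Set ℝ := { x | ∃ c : ℕ → ℕ, sValid s c ∧ x = sVal s c }

/-- The cylinder `Δ'_{c_1 ... c_n}` of rank `n` with base the first `n` terms of `c`. -/
def cyl (s n : ℕ) (c : ℕ → ℕ) : Set ℝ :=
  { x | ∃ c' : ℕ → ℕ, sValid s c' ∧ (∀ k < n, c' k = c k) ∧ x = sVal s c' }

/-- The cylinder `Δ'_{c_1 ... c_n p}`: prefix of length `n` from `c`, next digit `p`. -/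
def cylExt (s n : ℕ) (c : ℕ → ℕ) (p : ℕ) : Set ℝ :=
  { x | ∃ c' : ℕ → ℕ, sValid s c' ∧ (∀ k < n, c' k = c k) ∧ c' n = p ∧ x = sVal s c' }

/-- `g_n = Σ_{k=1}^n c_k / s^{c_1+⋯+c_k}`. -/
noncomputable def gPart (s n : ℕ) (c : ℕ → ℕ) : ℝ := ∑ k ∈ Finset.range n, sTerm s c k

open MeasureTheory Filter

section Aux

variable {s : ℕ} {c : ℕ → ℕ}

lemma sTerm_nonneg (s : ℕ) (c : ℕ → ℕ) (n : ℕ) : 0 ≤ sTerm s c n := by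
  unfold sTerm; positivity

lemma digit_sum_ge (hc : sValid s c) (n : ℕ) :
    n + 1 ≤ ∑ k ∈ Finset.range (n + 1), c k := by
  calc n + 1 = (Finset.range (n+1)).card • 1 := by simp
  _ ≤ ∑ k ∈ Finset.range (n + 1), c k :=
    Finset.card_nsmul_le_sum _ _ _ (fun k _ => (hc k).1)

lemma sTerm_le (hs : 2 < s) (hc : sValid s c) (n : ℕ) :
    sTerm s c n ≤ (s - 1 : ℝ) * ((1:ℝ)/s) ^ (n + 1) := by
  have hs0 : (1:ℝ) < (s:ℝ) := by exact_mod_cast Nat.lt_of_lt_of_le one_lt_two hs.le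
  have hs0' : (0:ℝ) < (s:ℝ) := by linarith
  unfold sTerm
  rw [div_le_iff₀ (by positivity)]
  have h1 : (c n : ℝ) ≤ (s - 1 : ℝ) := by
    have h := (hc n).2
    have h' : c n + 1 ≤ s := by omega
    have h'' : ((c n : ℕ) : ℝ) + 1 ≤ (s : ℝ) := by exact_mod_cast h'
    linarith
  have h2 : ((1:ℝ)/s) ^ (n+1) * (s:ℝ) ^ (∑ k ∈ Finset.range (n + 1), c k) ≥ 1 := by
    have hp : (s:ℝ) ^ (n+1) ≤ (s:ℝ) ^ (∑ k ∈ Finset.range (n+1), c k) :=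
      pow_le_pow_right₀ hs0.le (digit_sum_ge hc n)
    have hpos : (0:ℝ) < (s:ℝ)^(n+1) := by positivity
    rw [ge_iff_le, div_pow, one_pow, div_mul_eq_mul_div, one_mul, le_div_iff₀ hpos, one_mul]
    exact hp
  calc (c n : ℝ) = (c n : ℝ) * 1 := (mul_one _).symm
  _ ≤ (s - 1 : ℝ) * (((1:ℝ)/s) ^ (n+1) * (s:ℝ) ^ (∑ k ∈ Finset.range (n + 1), c k)) := by
      apply mul_le_mul h1 h2 one_pos.le (by linarith)
  _ = (s - 1 : ℝ) * ((1:ℝ)/s) ^ (n + 1) * (s:ℝ) ^ (∑ k ∈ Finset.range (n + 1), c k) := by ring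

lemma geom_bound (hs : 2 < s) :
    Summable (fun n : ℕ => (s - 1 : ℝ) * ((1:ℝ)/s) ^ (n + 1)) := by
  have hs0 : (0:ℝ) < (s:ℝ) := by positivity
  apply Summable.mul_left
  have : Summable (fun n : ℕ => ((1:ℝ)/s) ^ n) := by
    apply summable_geometric_of_lt_one (by positivity)
    rw [div_lt_one hs0]
    exact_mod_cast Nat.lt_of_lt_of_le one_lt_two hs.le
  simpa [pow_succ] using this.mul_right ((1:ℝ)/s)

lemma sTerm_summable (hs : 2 < s) (hc : sValid s c) : Summable (sTerm s c) :=
  Summable.of_nonneg_of_le (sTerm_nonneg s c) (sTerm_le hs hc) (geom_bound hs)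

lemma tail_bound (hs : 2 < s) (hc : sValid s c) (n : ℕ) :
    gPart s n c ≤ sVal s c ∧ sVal s c ≤ gPart s n c + ((1:ℝ)/s) ^ n := by
  have hsum := sTerm_summable hs hc
  have key := Summable.sum_add_tsum_nat_add (f := sTerm s c) n hsum
  have htail0 : 0 ≤ ∑' i : ℕ, sTerm s c (i + n) :=
    tsum_nonneg (fun i => sTerm_nonneg s c _)
  have hs0 : (0:ℝ) < (s:ℝ) := by positivity
  have hs1 : (1:ℝ) < (s:ℝ) := by exact_mod_cast Nat.lt_of_lt_of_le one_lt_two hs.le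
  have htail1 : ∑' i : ℕ, sTerm s c (i + n) ≤ ((1:ℝ)/s) ^ n := by
    have h1 : ∑' i : ℕ, sTerm s c (i + n)
        ≤ ∑' i : ℕ, (s - 1 : ℝ) * ((1:ℝ)/s) ^ (i + n + 1) := by
      apply Summable.tsum_le_tsum (fun i => sTerm_le hs hc (i + n)) (hsum.comp_injective (add_left_injective n))
      exact ((geom_bound hs).comp_injective (add_left_injective n))
    have h2 : ∑' i : ℕ, (s - 1 : ℝ) * ((1:ℝ)/s) ^ (i + n + 1) = ((1:ℝ)/s) ^ n := by
      have hr0 : (0:ℝ) ≤ (1:ℝ)/s := by positivity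
      have hr1 : (1:ℝ)/s < 1 := by rw [div_lt_one hs0]; exact hs1
      have : ∀ i : ℕ, (s - 1 : ℝ) * ((1:ℝ)/s) ^ (i + n + 1)
          = ((s - 1 : ℝ) * ((1:ℝ)/s) ^ (n + 1)) * ((1:ℝ)/s) ^ i := fun i => by ring
      rw [tsum_congr this, tsum_mul_left, tsum_geometric_of_lt_one hr0 hr1]
      have : (1 - (1:ℝ)/s)⁻¹ = s / (s - 1) := by
        rw [one_sub_div hs0.ne', inv_div]
      rw [this, pow_succ]
      have hne : (s:ℝ) - 1 ≠ 0 := by linarith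
      field_simp
    linarith
  constructor
  · unfold sVal gPart; nlinarith [key]
  · unfold sVal gPart; nlinarith [key]

lemma gPart_congr {c' : ℕ → ℕ} (n : ℕ) (h : ∀ k < n, c' k = c k) :
    gPart s n c' = gPart s n c := by
  unfold gPart
  apply Finset.sum_congr rfl
  intro k hk
  rw [Finset.mem_range] at hk
  unfold sTerm
  have hsum : ∑ j ∈ Finset.range (k+1), c' j = ∑ j ∈ Finset.range (k+1), c j :=
    Finset.sum_congr rfl (fun j hj => h j (by rw [Finset.mem_range] at hj; omega))
  rw [h k hk, hsum]

end Aux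

theorem stmt14 (s : ℕ) (hs : 2 < s) : IsNowhereDense (Sset s) := by
  have hs0 : (0:ℝ) < (s:ℝ) := by positivity
  have hs1 : (1:ℝ) < (s:ℝ) := by exact_mod_cast Nat.lt_of_lt_of_le one_lt_two hs.le
  -- the covering sets
  set dig : ∀ n : ℕ, (Fin n → Fin (s-1)) → (ℕ → ℕ) :=
    fun n d k => if h : k < n then (d ⟨k, h⟩ : ℕ) + 1 else 1 with hdig
  set U : ℕ → Set ℝ := fun n => ⋃ d : Fin n → Fin (s-1),
    Set.Icc (gPart s n (dig n d)) (gPart s n (dig n d) + ((1:ℝ)/s) ^ n) with hU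
  have hsub : ∀ n, Sset s ⊆ U n := by
    rintro n x ⟨c, hc, rfl⟩
    have hd : ∀ k, c k - 1 < s - 1 := fun k => by have := hc k; omega
    refine Set.mem_iUnion.2 ⟨fun i => ⟨c i - 1, hd i⟩, ?_⟩
    have heq : ∀ k < n, dig n (fun i : Fin n => (⟨c i - 1, hd i⟩ : Fin (s-1))) k = c k := by
      intro k hk
      simp only [hdig, dif_pos hk]
      have := (hc k).1; omega
    have hg : gPart s n (dig n (fun i : Fin n => (⟨c i - 1, hd i⟩ : Fin (s-1)))) = gPart s n c :=
      gPart_congr n heq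
    rw [hg]
    exact ⟨(tail_bound hs hc n).1, (tail_bound hs hc n).2⟩
  have hclosed : ∀ n, IsClosed (U n) :=
    fun n => isClosed_iUnion_of_finite (fun d => isClosed_Icc)
  have hmeas : ∀ n, volume (U n) ≤ ENNReal.ofReal ((((s:ℝ)-1)/s) ^ n) := by
    intro n
    calc volume (U n) ≤ ∑ d : Fin n → Fin (s-1),
        volume (Set.Icc (gPart s n (dig n d)) (gPart s n (dig n d) + ((1:ℝ)/s) ^ n)) :=
          measure_iUnion_fintype_le _ _
    _ = ∑ d : Fin n → Fin (s-1), ENNReal.ofReal (((1:ℝ)/s) ^ n) := by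
          apply Finset.sum_congr rfl
          intro d _
          rw [Real.volume_Icc]
          congr 1
          ring
    _ = ((s-1)^n : ℕ) * ENNReal.ofReal (((1:ℝ)/s) ^ n) := by
          rw [Finset.sum_const, Finset.card_univ, Fintype.card_fun]
          simp [nsmul_eq_mul]
    _ ≤ ENNReal.ofReal ((((s:ℝ)-1)/s) ^ n) := by
          rw [← ENNReal.ofReal_natCast, ← ENNReal.ofReal_mul (by positivity)]
          apply ENNReal.ofReal_le_ofReal
          have : (((s-1)^n : ℕ) : ℝ) = ((s:ℝ)-1)^n := by
            push_cast [Nat.cast_sub (by omega : 1 ≤ s)]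
            ring
          rw [this, ← mul_pow, mul_one_div]
  have hcl : volume (closure (Sset s)) = 0 := by
    have hle : ∀ n, volume (closure (Sset s)) ≤ ENNReal.ofReal ((((s:ℝ)-1)/s) ^ n) := by
      intro n
      calc volume (closure (Sset s)) ≤ volume (U n) :=
            measure_mono (closure_minimal (hsub n) (hclosed n))
      _ ≤ _ := hmeas n
    have htend : Tendsto (fun n => ENNReal.ofReal ((((s:ℝ)-1)/s) ^ n)) atTop (nhds 0) := by
      have h1 : Tendsto (fun n : ℕ => (((s:ℝ)-1)/s) ^ n) atTop (nhds 0) := by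
        apply tendsto_pow_atTop_nhds_zero_of_lt_one
        · exact div_nonneg (by linarith) hs0.le
        · rw [div_lt_one hs0]; linarith
      simpa using ENNReal.tendsto_ofReal h1
    exact le_antisymm (ge_of_tendsto' htend hle) zero_le
  rw [IsNowhereDense]
  by_contra h
  have hne : (interior (closure (Sset s))).Nonempty := Set.nonempty_iff_ne_empty.2 h
  have hpos : 0 < volume (interior (closure (Sset s))) :=
    IsOpen.measure_pos volume isOpen_interior hne
  have : volume (interior (closure (Sset s))) ≤ 0 := hcl ▸ measure_mono interior_subset
  exact absurd (lt_of_lt_of_le hpos this) (lt_irrefl 0)
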